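/- Let (α_b)_{b≥2} be nonnegative real numbers satisfying ∑_{b=2}^∞ α_b (log b)/b² < ∞, and set λ_b = b(b−1)/2 + α_b for each integer b ≥ 2. Let G_n(b) ∈ [0,1] be defined for all integers 2 ≤ b ≤ n, with G_b(b) = 1 for all b ≥ 2 and |G_{n+1}(b) − G_n(b)| ≤ α_{n+1}/λ_{n+1} for all 2 ≤ b ≤ n, and let G_∞(b) = lim_{n→∞} G_n(b). Then lim_{n→∞} ∑_{b=2}^n (b/λ_b)|G_n(b) − G_∞(b)| = 0. -/

import Mathlib

open Filter Finset

/-- Under condition (segcond), the third term in the decomposition of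
`E[S_n] - θ h_{n-1}` vanishes: `∑_{b=2}^n (b/λ_b)|G_n(b) - G_∞(b)| → 0`. -/
theorem stmt_13 (α : ℕ → ℝ) (hα : ∀ b : ℕ, 2 ≤ b → 0 ≤ α b)
    (lam : ℕ → ℝ) (hlam : ∀ b : ℕ, lam b = (b : ℝ) * ((b : ℝ) - 1) / 2 + α b)
    (G : ℕ → ℕ → ℝ)
    (hG01 : ∀ n b : ℕ, 2 ≤ b → b ≤ n → G n b ∈ Set.Icc (0 : ℝ) 1)
    (hGbb : ∀ b : ℕ, 2 ≤ b → G b b = 1)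
    (hGinc : ∀ n b : ℕ, 2 ≤ b → b ≤ n → |G (n + 1) b - G n b| ≤ α (n + 1) / lam (n + 1))
    (hseg : Summable (fun b : ℕ => α b * Real.log b / (b : ℝ) ^ 2))
    (Ginf : ℕ → ℝ)
    (hGinf : ∀ b : ℕ, 2 ≤ b →
      Filter.Tendsto (fun n => G n b) Filter.atTop (nhds (Ginf b))) :
    Filter.Tendsto
      (fun n : ℕ => ∑ b ∈ Finset.Icc 2 n, (b : ℝ) / lam b * |G n b - Ginf b|)
      Filter.atTop (nhds 0) := by
  have hlam_ge : ∀ m : ℕ, 2 ≤ m → (m : ℝ) ^ 2 / 4 ≤ lam m := by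
    intro m hm
    have hm' : (2 : ℝ) ≤ (m : ℝ) := by exact_mod_cast hm
    have h0 := hα m hm
    rw [hlam m]; nlinarith
  have hlam_pos : ∀ m : ℕ, 2 ≤ m → 0 < lam m := by
    intro m hm
    have hm' : (2 : ℝ) ≤ (m : ℝ) := by exact_mod_cast hm
    have := hlam_ge m hm
    nlinarith
  have hlog1 : ∀ m : ℕ, 3 ≤ m → 1 ≤ Real.log m := by
    intro m hm
    have hm' : (3 : ℝ) ≤ (m : ℝ) := by exact_mod_cast hm
    rw [Real.le_log_iff_exp_le (by linarith)]
    have := Real.exp_one_lt_d9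
    linarith
  set f : ℕ → ℝ := fun m => α m * Real.log m / (m : ℝ) ^ 2 with hf
  set F : ℕ → ℝ := fun m => if 3 ≤ m then f m else 0 with hFdef
  set ρ : ℕ → ℝ := fun m => if 3 ≤ m then α m / lam m else 0 with hρdef
  have hfnonneg : ∀ m : ℕ, 3 ≤ m → 0 ≤ f m := by
    intro m hm
    have h1 := hα m (by omega)
    have h2 := hlog1 m hm
    have : (0:ℝ) ≤ (m:ℝ)^2 := by positivity
    exact div_nonneg (mul_nonneg h1 (by linarith)) this
  have hFnonneg : ∀ m, 0 ≤ F m := by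
    intro m
    simp only [hFdef]
    split
    · next h => exact hfnonneg m h
    · exact le_refl 0
  have hFsum : Summable F := by
    refine Summable.of_nonneg_of_le hFnonneg ?_ hseg.abs
    intro m
    simp only [hFdef]
    split
    · exact le_abs_self _
    · exact abs_nonneg _
  have hρnonneg : ∀ m, 0 ≤ ρ m := by
    intro m
    simp only [hρdef]
    split
    · next h => exact div_nonneg (hα m (by omega)) (hlam_pos m (by omega)).le
    · exact le_refl 0
  -- basic division bound
  have hdiv : ∀ m : ℕ, 3 ≤ m → α m / lam m ≤ 4 * α m / (m : ℝ) ^ 2 := by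
    intro m hm
    have hm2 : 2 ≤ m := by omega
    have hl := hlam_ge m hm2
    have hlp := hlam_pos m hm2
    have hmp : (0:ℝ) < (m:ℝ)^2 := by positivity
    have hαm := hα m hm2
    rw [div_le_div_iff₀ hlp hmp]
    nlinarith
  have hρleF : ∀ m, ρ m ≤ 4 * F m := by
    intro m
    simp only [hρdef, hFdef]
    split
    · next h =>
      refine (hdiv m h).trans ?_
      have hαm := hα m (by omega)
      have hlg := hlog1 m h
      have hmp : (0:ℝ) < (m:ℝ)^2 := by positivity
      show 4 * α m / (m:ℝ)^2 ≤ 4 * (α m * Real.log m / (m:ℝ)^2)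
      have heq : 4 * (α m * Real.log m / (m:ℝ)^2) = 4 * (α m * Real.log m) / (m:ℝ)^2 := by
        ring
      rw [heq, div_le_div_iff₀ hmp hmp]
      nlinarith [mul_nonneg (mul_nonneg hαm hmp.le) (sub_nonneg.mpr hlg)]
    · norm_num
  have hρsum : Summable ρ := Summable.of_nonneg_of_le hρnonneg hρleF (hFsum.mul_left 4)
  have hlogρ : ∀ m : ℕ, 3 ≤ m → Real.log m * ρ m ≤ 4 * F m := by
    intro m hm
    simp only [hρdef, hFdef, if_pos hm]
    have hlg := hlog1 m hm
    have h1 : Real.log m * (α m / lam m) ≤ Real.log m * (4 * α m / (m:ℝ)^2) :=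
      mul_le_mul_of_nonneg_left (hdiv m hm) (by linarith)
    refine h1.trans ?_
    rw [hf]
    have : Real.log m * (4 * α m / (m:ℝ)^2) = 4 * (α m * Real.log m / (m:ℝ)^2) := by
      ring
    rw [this]
  -- tails
  set T : ℕ → ℝ := fun n => ∑' k, ρ (k + (n + 1)) with hTdef
  have hρtail : ∀ n : ℕ, Summable (fun k => ρ (k + (n + 1))) := fun n =>
    (summable_nat_add_iff (n + 1)).mpr hρsum
  have hFtail : ∀ n : ℕ, Summable (fun k => F (k + (n + 1))) := fun n =>
    (summable_nat_add_iff (n + 1)).mpr hFsum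
  have hTnonneg : ∀ n, 0 ≤ T n := fun n => tsum_nonneg fun k => hρnonneg _
  -- telescoping bound
  have hGdiff : ∀ n b : ℕ, 2 ≤ b → b ≤ n → ∀ j : ℕ,
      |G (n + j) b - G n b| ≤ ∑ k ∈ Finset.range j, ρ (k + (n + 1)) := by
    intro n b hb hbn j
    induction j with
    | zero => simp
    | succ j ih =>
      have hstep : |G (n + j + 1) b - G (n + j) b| ≤ ρ (j + (n + 1)) := by
        have h1 := hGinc (n + j) b hb (le_trans hbn (Nat.le_add_right n j))
        have h2 : 3 ≤ n + j + 1 := by omega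
        have h3 : j + (n + 1) = n + j + 1 := by omega
        rw [h3]
        simpa [hρdef, if_pos h2] using h1
      have h4 : n + (j + 1) = n + j + 1 := by omega
      rw [h4, Finset.sum_range_succ]
      calc |G (n + j + 1) b - G n b|
          ≤ |G (n + j + 1) b - G (n + j) b| + |G (n + j) b - G n b| := by
            have := abs_sub_le (G (n + j + 1) b) (G (n + j) b) (G n b)
            linarith
        _ ≤ ρ (j + (n + 1)) + ∑ k ∈ Finset.range j, ρ (k + (n + 1)) := by
            exact add_le_add hstep ih
        _ = ∑ k ∈ Finset.range j, ρ (k + (n + 1)) + ρ (j + (n + 1)) := by ring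
  have hGinfbound : ∀ n b : ℕ, 2 ≤ b → b ≤ n → |G n b - Ginf b| ≤ T n := by
    intro n b hb hbn
    have h1 : Filter.Tendsto (fun N => |G N b - G n b|) Filter.atTop
        (nhds |Ginf b - G n b|) := by
      exact ((hGinf b hb).sub tendsto_const_nhds).abs
    have h2 : ∀ᶠ N in Filter.atTop, |G N b - G n b| ≤ T n := by
      filter_upwards [Filter.eventually_ge_atTop n] with N hN
      obtain ⟨j, rfl⟩ := Nat.exists_eq_add_of_le hN
      refine (hGdiff n b hb hbn j).trans ?_
      exact Summable.sum_le_tsum (Finset.range j) (fun k _ => hρnonneg _) (hρtail n)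
    have := le_of_tendsto h1 h2
    rwa [abs_sub_comm]
  -- harmonic sum bound
  have hA : ∀ n : ℕ, 2 ≤ n →
      ∑ b ∈ Finset.Icc 2 n, (b : ℝ) / lam b ≤ 4 * (1 + Real.log n) := by
    intro n hn
    have step1 : ∑ b ∈ Finset.Icc 2 n, (b : ℝ) / lam b
        ≤ ∑ b ∈ Finset.Icc 2 n, 4 * ((b : ℝ))⁻¹ := by
      refine Finset.sum_le_sum ?_
      intro b hb
      rw [Finset.mem_Icc] at hb
      have hb2 := hb.1
      have hbp : (0:ℝ) < (b:ℝ) := by positivity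
      have hl := hlam_ge b hb2
      have hlp := hlam_pos b hb2
      rw [div_le_iff₀ hlp]
      have hb' : (2:ℝ) ≤ (b:ℝ) := by exact_mod_cast hb2
      have h4 : 4 * ((b:ℝ))⁻¹ = 4 / (b:ℝ) := by rw [div_eq_mul_inv]
      rw [h4, div_mul_eq_mul_div, le_div_iff₀ hbp]
      nlinarith
    have step2 : ∑ b ∈ Finset.Icc 2 n, 4 * ((b : ℝ))⁻¹
        = 4 * ∑ b ∈ Finset.Icc 2 n, ((b : ℝ))⁻¹ := by
      rw [Finset.mul_sum]
    have step3 : ∑ b ∈ Finset.Icc 2 n, ((b : ℝ))⁻¹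
        ≤ ∑ b ∈ Finset.Icc 1 n, ((b : ℝ))⁻¹ := by
      refine Finset.sum_le_sum_of_subset_of_nonneg
        (Finset.Icc_subset_Icc_left (by norm_num)) ?_
      intro i hi _
      rw [Finset.mem_Icc] at hi
      have : (0:ℝ) < (i:ℝ) := by
        have := hi.1; exact_mod_cast Nat.lt_of_lt_of_le Nat.zero_lt_one this
      positivity
    have step4 : ∑ b ∈ Finset.Icc 1 n, ((b : ℝ))⁻¹ ≤ 1 + Real.log n := by
      have h := harmonic_le_one_add_log n
      have heq : ((harmonic n : ℚ) : ℝ) = ∑ b ∈ Finset.Icc 1 n, ((b : ℝ))⁻¹ := by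
        rw [harmonic_eq_sum_Icc]
        push_cast
        rfl
      rw [heq] at h
      exact h
    have hlogn : 0 ≤ Real.log n := Real.log_nonneg (by exact_mod_cast Nat.one_le_of_lt hn)
    calc ∑ b ∈ Finset.Icc 2 n, (b : ℝ) / lam b
        ≤ 4 * ∑ b ∈ Finset.Icc 2 n, ((b : ℝ))⁻¹ := by rw [← step2]; exact step1
      _ ≤ 4 * (1 + Real.log n) := by
          have := step3.trans step4
          linarith
  -- main estimate
  set B : ℕ → ℝ := fun n => 48 * ∑' k, F (k + (n + 1)) with hBdef
  have hmain : ∀ n : ℕ, 2 ≤ n →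
      ∑ b ∈ Finset.Icc 2 n, (b : ℝ) / lam b * |G n b - Ginf b| ≤ B n := by
    intro n hn
    have h1 : ∑ b ∈ Finset.Icc 2 n, (b : ℝ) / lam b * |G n b - Ginf b|
        ≤ (∑ b ∈ Finset.Icc 2 n, (b : ℝ) / lam b) * T n := by
      rw [Finset.sum_mul]
      refine Finset.sum_le_sum ?_
      intro b hb
      rw [Finset.mem_Icc] at hb
      have hnn : 0 ≤ (b : ℝ) / lam b :=
        div_nonneg (by positivity) (hlam_pos b hb.1).le
      exact mul_le_mul_of_nonneg_left (hGinfbound n b hb.1 hb.2) hnn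
    have h2 : (∑ b ∈ Finset.Icc 2 n, (b : ℝ) / lam b) * T n
        ≤ 4 * (1 + Real.log n) * T n :=
      mul_le_mul_of_nonneg_right (hA n hn) (hTnonneg n)
    have h3 : 4 * (1 + Real.log n) * T n ≤ B n := by
      have hL : (4 * (1 + Real.log n)) * T n
          = ∑' k, (4 * (1 + Real.log n)) * ρ (k + (n + 1)) := tsum_mul_left.symm
      have hR : B n = ∑' k, (48:ℝ) * F (k + (n + 1)) := tsum_mul_left.symm
      rw [hL, hR]
      refine Summable.tsum_le_tsum ?_ ((hρtail n).mul_left _) ((hFtail n).mul_left 48)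
      intro k
      set m := k + (n + 1) with hm
      have hm3 : 3 ≤ m := by omega
      have hmn : n ≤ m := by omega
      have hlgm := hlog1 m hm3
      have hlgn : Real.log n ≤ Real.log m := by
        refine Real.log_le_log (by exact_mod_cast Nat.lt_of_lt_of_le (by omega) hn) ?_
        exact_mod_cast hmn
      have hc : 4 * (1 + Real.log n) ≤ 12 * Real.log m := by linarith
      calc 4 * (1 + Real.log n) * ρ m ≤ 12 * Real.log m * ρ m :=
            mul_le_mul_of_nonneg_right hc (hρnonneg m)
        _ = 12 * (Real.log m * ρ m) := by ring
        _ ≤ 12 * (4 * F m) := by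
            have := hlogρ m hm3
            nlinarith [hFnonneg m]
        _ = 48 * F m := by ring
    linarith
  have hnonneg : ∀ n : ℕ,
      0 ≤ ∑ b ∈ Finset.Icc 2 n, (b : ℝ) / lam b * |G n b - Ginf b| := by
    intro n
    refine Finset.sum_nonneg ?_
    intro b hb
    rw [Finset.mem_Icc] at hb
    exact mul_nonneg (div_nonneg (by positivity) (hlam_pos b hb.1).le) (abs_nonneg _)
  have hBtend : Filter.Tendsto B Filter.atTop (nhds 0) := by
    have h0 : Filter.Tendsto (fun i => ∑' k, F (k + i)) Filter.atTop (nhds 0) :=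
      tendsto_sum_nat_add F
    have h1 : Filter.Tendsto (fun n : ℕ => ∑' k, F (k + (n + 1))) Filter.atTop (nhds 0) :=
      h0.comp (tendsto_add_atTop_nat 1)
    have := h1.const_mul (48 : ℝ)
    simpa using this
  refine squeeze_zero' (Filter.Eventually.of_forall hnonneg) ?_ hBtend
  filter_upwards [Filter.eventually_ge_atTop 2] with n hn
  exact hmain n hn
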